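/- arXiv:1809.07299 — 3 statements merged into one kernel-verified Lean document; each statement's English description precedes it below -/
import Mathlib

section
/- Let b ≥ 1 and 0 ≤ r < b be integers, and let γ₀ > 0 be a real number. Let X₍₁₎, …, X₍b₎ be integrable real-valued random variables on a probability space (interpreted as the ranks of the b referents ordered from best to worst) satisfying E[X₍i₎] = (γ₀/b)·i for every 1 ≤ i ≤ b. Let I be a uniformly random (b−r)-element subset of {1,…,b} (the indices of the available referents), independent of (X₍₁₎,…,X₍b₎). For 1 ≤ l ≤ b−r, let i_l denote the l-th smallest element of I. Then E[X₍i_l₎] = γ₀(b+1)l / (b(b−r+1)). -/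
open MeasureTheory ProbabilityTheory Finset
open scoped ENNReal

/-- Finsets over a countable type carry the discrete σ-algebra. -/
instance finsetMeasurableSpace (α : Type*) : MeasurableSpace (Finset α) := ⊤


lemma sort_insert_max {s : Finset ℕ} {a : ℕ} (h : ∀ x ∈ s, x < a) :
    (insert a s).sort (· ≤ ·) = s.sort (· ≤ ·) ++ [a] := by
  have ha : a ∉ s := fun hx => lt_irrefl a (h a hx)
  refine (fun hp hs => List.Perm.eq_of_pairwise' (Finset.pairwise_sort _ _) hs hp) ?_ ?_
  · refine ((insert a s).sort_perm_toList (· ≤ ·)).trans ?_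
    refine ((Finset.toList_insert ha).trans ?_).trans (List.perm_append_singleton a _).symm
    exact ((s.sort_perm_toList (· ≤ ·)).symm.cons a)
  · rw [List.pairwise_append]
    refine ⟨Finset.pairwise_sort _ _, List.pairwise_singleton _ a, ?_⟩
    intro x hx y hy
    rw [List.mem_singleton] at hy
    subst hy
    exact (h x ((Finset.mem_sort _).1 hx)).le

lemma key_count : ∀ (b : ℕ) (m l : ℕ), 1 ≤ l → l ≤ m →
    ∑ s ∈ (Finset.range b).powersetCard m, ((s.sort (· ≤ ·)).getD (l-1) 0 + 1)
      = l * (b+1).choose (m+1) := by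
  intro b
  induction b with
  | zero =>
      intro m l hl hlm
      have hm : 0 < m := lt_of_lt_of_le hl hlm
      obtain ⟨m', rfl⟩ : ∃ m', m = m' + 1 := ⟨m - 1, (Nat.succ_pred_eq_of_pos hm).symm⟩
      simp [Nat.choose_eq_zero_of_lt (by omega : 1 < m' + 2)]
  | succ b ih =>
      intro m l hl hlm
      have hm : 0 < m := lt_of_lt_of_le hl hlm
      obtain ⟨m', rfl⟩ : ∃ m', m = m' + 1 := ⟨m - 1, (Nat.succ_pred_eq_of_pos hm).symm⟩
      have hbn : b ∉ Finset.range b := by simp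
      rw [Finset.range_add_one, Finset.powersetCard_succ_insert hbn]
      have hdisj : Disjoint ((Finset.range b).powersetCard (m'+1))
          (((Finset.range b).powersetCard m').image (insert b)) := by
        rw [Finset.disjoint_left]
        intro s hs hs'
        rw [Finset.mem_powersetCard] at hs
        obtain ⟨t, ht, rfl⟩ := Finset.mem_image.1 hs'
        rw [Finset.mem_powersetCard] at ht
        exact hbn (hs.1 (Finset.mem_insert_self b t))
      rw [Finset.sum_union hdisj]
      have hinj : ∀ t ∈ (Finset.range b).powersetCard m', ∀ t' ∈ (Finset.range b).powersetCard m',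
          insert b t = insert b t' → t = t' := by
        intro t ht t' ht' h
        rw [Finset.mem_powersetCard] at ht ht'
        have hb1 : b ∉ t := fun hx => hbn (ht.1 hx)
        have hb2 : b ∉ t' := fun hx => hbn (ht'.1 hx)
        ext x
        constructor
        · intro hx
          have := Finset.mem_insert_self x t
          have h1 : x ∈ insert b t' := h ▸ Finset.mem_insert_of_mem hx
          rcases Finset.mem_insert.1 h1 with rfl | hx'
          · exact absurd hx hb1
          · exact hx'
        · intro hx
          have h1 : x ∈ insert b t := h.symm ▸ Finset.mem_insert_of_mem hx
          rcases Finset.mem_insert.1 h1 with rfl | hx'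
          · exact absurd hx hb2
          · exact hx'
      rw [Finset.sum_image hinj]
      have hsort : ∀ t ∈ (Finset.range b).powersetCard m',
          ((insert b t).sort (· ≤ ·)) = t.sort (· ≤ ·) ++ [b] := by
        intro t ht
        rw [Finset.mem_powersetCard] at ht
        exact sort_insert_max (fun x hx => Finset.mem_range.1 (ht.1 hx))
      rcases Nat.lt_or_ge (l-1) m' with hcase | hcase
      · -- l ≤ m'
        have hsum2 : ∑ t ∈ (Finset.range b).powersetCard m',
            (((insert b t).sort (· ≤ ·)).getD (l-1) 0 + 1)
            = ∑ t ∈ (Finset.range b).powersetCard m', ((t.sort (· ≤ ·)).getD (l-1) 0 + 1) := by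
          refine Finset.sum_congr rfl (fun t ht => ?_)
          rw [hsort t ht, List.getD_append]
          rw [Finset.length_sort]
          rw [(Finset.mem_powersetCard.1 ht).2]
          exact hcase
        rw [hsum2, ih (m'+1) l hl hlm, ih m' l hl (by omega)]
        have h1 := Nat.choose_succ_succ' (b+1) (m'+1)
        nlinarith [h1]
      · -- l = m' + 1
        have hleq : l = m' + 1 := by omega
        subst hleq
        have hsum2 : ∑ t ∈ (Finset.range b).powersetCard m',
            (((insert b t).sort (· ≤ ·)).getD m' 0 + 1)
            = ∑ t ∈ (Finset.range b).powersetCard m', (b + 1) := by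
          refine Finset.sum_congr rfl (fun t ht => ?_)
          rw [hsort t ht, List.getD_append_right]
          · rw [Finset.length_sort, (Finset.mem_powersetCard.1 ht).2]
            simp
          · rw [Finset.length_sort, (Finset.mem_powersetCard.1 ht).2]
        have ih' := ih (m'+1) (m'+1) hl le_rfl
        simp only [Nat.add_sub_cancel] at ih' ⊢
        rw [hsum2, Finset.sum_const, Finset.card_powersetCard, Finset.card_range, ih',
          smul_eq_mul]
        have h1 := Nat.choose_succ_succ' (b+1) (m'+1)
        have h2 := Nat.add_one_mul_choose_eq b m'
        nlinarith [h1, h2]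

lemma sort_image_val {b : ℕ} (s : Finset (Fin b)) :
    (s.image Fin.val).sort (· ≤ ·) = (s.sort (· ≤ ·)).map Fin.val := by
  refine (fun hp hs => List.Perm.eq_of_pairwise' (Finset.pairwise_sort _ _) hs hp) ?_ ?_
  · rw [← Multiset.coe_eq_coe]
    rw [Finset.sort_eq]
    have : (s.image Fin.val).val = s.val.map Fin.val := by
      rw [Finset.image_val, Multiset.dedup_eq_self.2]
      exact Multiset.Nodup.map Fin.val_injective s.nodup
    rw [this, ← Multiset.map_coe, Finset.sort_eq]
  · have := Finset.pairwise_sort (α := Fin b) s (· ≤ ·)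
    exact List.Pairwise.map Fin.val (fun a b h => h) this

lemma key_fin {b : ℕ} (hb : 1 ≤ b) (m l : ℕ) (hl : 1 ≤ l) (hlm : l ≤ m) :
    ∑ s ∈ Finset.powersetCard m (Finset.univ : Finset (Fin b)),
      ((((s.sort (· ≤ ·)).getD (l-1) ⟨0, hb⟩ : Fin b) : ℕ) + 1) = l * (b+1).choose (m+1) := by
  rw [← key_count b m l hl hlm]
  refine Finset.sum_bij (fun s _ => s.image Fin.val) ?_ ?_ ?_ ?_
  · intro s hs
    rw [Finset.mem_powersetCard_univ] at hs
    rw [Finset.mem_powersetCard]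
    constructor
    · intro x hx
      obtain ⟨a, _, rfl⟩ := Finset.mem_image.1 hx
      exact Finset.mem_range.2 a.isLt
    · rw [Finset.card_image_of_injective _ Fin.val_injective, hs]
  · intro s hs t ht h
    exact Finset.image_injective Fin.val_injective h
  · intro t ht
    rw [Finset.mem_powersetCard] at ht
    have hlt : ∀ x ∈ t, x < b := fun x hx => Finset.mem_range.1 (ht.1 hx)
    refine ⟨t.attachFin hlt, ?_, ?_⟩
    · rw [Finset.mem_powersetCard_univ, Finset.card_attachFin, ht.2]
    · ext x
      simp only [Finset.mem_image]
      constructor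
      · rintro ⟨a, ha, rfl⟩
        exact (Finset.mem_attachFin hlt).1 ha
      · intro hx
        exact ⟨⟨x, hlt x hx⟩, (Finset.mem_attachFin hlt).2 hx, rfl⟩
  · intro s hs
    rw [Finset.mem_powersetCard_univ] at hs
    have hlen : l - 1 < (s.sort (· ≤ ·)).length := by
      rw [Finset.length_sort, hs]; omega
    rw [sort_image_val, List.getD_eq_getElem _ _ hlen,
      List.getD_eq_getElem _ _ (by simpa using hlen), List.getElem_map]

/-- Proposition 1: expected rank of the `l`-th best available referent.
The referent ranks `X 0, …, X (b-1)` (best to worst) satisfy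
`E[X i] = (γ₀/b)·(i+1)`; `I` is a uniformly random `(b−r)`-element subset of the
referent indices (the available referents), independent of the ranks.  Then the
expected rank of the referent whose index is the `l`-th smallest element of `I`
is `γ₀(b+1)l/(b(b−r+1))`. -/
theorem expected_rank_available_referent {Ω : Type*} [MeasurableSpace Ω] (μ : Measure Ω)
    [IsProbabilityMeasure μ]
    (b r : ℕ) (hb : 1 ≤ b) (hr : r < b) (γ₀ : ℝ) (hγ₀ : 0 < γ₀)
    (X : Fin b → Ω → ℝ) (hXint : ∀ i, Integrable (X i) μ)
    (hXmean : ∀ i : Fin b, ∫ ω, X i ω ∂μ = (γ₀ / b) * ((i : ℕ) + 1))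
    (I : Ω → Finset (Fin b)) (hImeas : Measurable I)
    (hIunif : ∀ s : Finset (Fin b), s.card = b - r →
      μ {ω | I ω = s} = ((b.choose (b - r) : ℝ≥0∞))⁻¹)
    (hindep : IndepFun I (fun ω => fun i => X i ω) μ)
    (l : ℕ) (hl1 : 1 ≤ l) (hl2 : l ≤ b - r) :
    ∫ ω, X (((I ω).sort (· ≤ ·)).getD (l - 1) ⟨0, hb⟩) ω ∂μ
      = γ₀ * (b + 1) * l / (b * ((b : ℝ) - r + 1)) := by
  set m := b - r with hm
  set f : Finset (Fin b) → Fin b := fun s => (s.sort (· ≤ ·)).getD (l - 1) ⟨0, hb⟩ with hf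
  set 𝒮 : Finset (Finset (Fin b)) := Finset.powersetCard m Finset.univ with h𝒮
  have hmb : m ≤ b := Nat.sub_le b r
  have hC0 : b.choose m ≠ 0 := (Nat.choose_pos hmb).ne'
  -- events
  have hEmeas : ∀ s : Finset (Fin b), MeasurableSet {ω | I ω = s} := by
    intro s
    exact hImeas (show MeasurableSet {s} from trivial)
  have hμE : ∀ s ∈ 𝒮, μ {ω | I ω = s} = ((b.choose m : ℝ≥0∞))⁻¹ := by
    intro s hs
    exact hIunif s (Finset.mem_powersetCard_univ.1 hs)
  -- the union of events has full measure
  have hdisj : (𝒮 : Set (Finset (Fin b))).PairwiseDisjoint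
      (fun s => {ω | I ω = s}) := by
    intro s _ t _ hst
    refine Set.disjoint_left.2 fun ω h1 h2 => hst ?_
    exact h1.symm.trans h2
  have hU : μ (⋃ s ∈ 𝒮, {ω | I ω = s}) = 1 := by
    rw [measure_biUnion_finset hdisj (fun s _ => hEmeas s)]
    rw [Finset.sum_congr rfl hμE, Finset.sum_const, Finset.card_powersetCard,
      Finset.card_univ, Fintype.card_fin]
    rw [nsmul_eq_mul]
    rw [ENNReal.mul_inv_cancel (by exact_mod_cast hC0) (by simp)]
  have hUc : μ (⋃ s ∈ 𝒮, {ω | I ω = s})ᶜ = 0 := by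
    have hmeasU : MeasurableSet (⋃ s ∈ 𝒮, {ω | I ω = s}) :=
      MeasurableSet.biUnion 𝒮.countable_toSet (fun s _ => hEmeas s)
    rw [measure_compl hmeasU (by simp), hU, measure_univ, tsub_self]
  -- a.e. decomposition
  have hae : (fun ω => X (f (I ω)) ω)
      =ᵐ[μ] fun ω => ∑ s ∈ 𝒮, ({ω | I ω = s}).indicator (fun ω => X (f s) ω) ω := by
    have hmem : ∀ᵐ ω ∂μ, ω ∈ ⋃ s ∈ 𝒮, {ω | I ω = s} := by
      rw [MeasureTheory.ae_iff]
      have : {ω | ¬ ω ∈ ⋃ s ∈ 𝒮, {ω | I ω = s}} = (⋃ s ∈ 𝒮, {ω | I ω = s})ᶜ := rfl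
      rw [this, hUc]
    filter_upwards [hmem] with ω hω
    obtain ⟨s₀, hs₀, hωs₀⟩ := Set.mem_iUnion₂.1 hω
    have hI : I ω = s₀ := hωs₀
    rw [Finset.sum_eq_single s₀]
    · rw [Set.indicator_of_mem hωs₀, hI]
    · intro t ht hts
      refine Set.indicator_of_notMem ?_ _
      simp only [Set.mem_setOf_eq, hI]
      exact fun h => hts h.symm
    · intro h
      exact absurd hs₀ h
  have hintind : ∀ s ∈ 𝒮, Integrable (fun ω => ({ω | I ω = s}).indicator
      (fun ω => X (f s) ω) ω) μ := by
    intro s _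
    exact (hXint (f s)).indicator (hEmeas s)
  have hterm : ∀ s ∈ 𝒮, ∫ ω, ({ω | I ω = s}).indicator (fun ω => X (f s) ω) ω ∂μ
      = ((b.choose m : ℝ))⁻¹ * ((γ₀ / b) * (((f s : Fin b) : ℕ) + 1)) := by
    intro s hs
    have hprod : (fun ω => ({ω | I ω = s}).indicator (fun ω => X (f s) ω) ω)
        = fun ω => (if I ω = s then (1:ℝ) else 0) * X (f s) ω := by
      funext ω
      rw [Set.indicator_apply]
      by_cases h : I ω = s <;> simp [h]
    rw [hprod]
    have hi : IndepFun ((fun t : Finset (Fin b) => if t = s then (1:ℝ) else 0) ∘ I)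
        ((fun v : Fin b → ℝ => v (f s)) ∘ (fun ω => fun i => X i ω)) μ :=
      hindep.comp measurable_from_top (measurable_pi_apply (f s))
    have hint1 : Integrable ((fun t : Finset (Fin b) => if t = s then (1:ℝ) else 0) ∘ I) μ := by
      have : ((fun t : Finset (Fin b) => if t = s then (1:ℝ) else 0) ∘ I)
          = ({ω | I ω = s}).indicator (fun _ => (1:ℝ)) := by
        funext ω
        rw [Set.indicator_apply]
        by_cases h : I ω = s <;> simp [h]
      rw [this]
      exact (integrable_const (1:ℝ)).indicator (hEmeas s)
    have hmul := hi.integral_mul_eq_mul_integral hint1.aestronglyMeasurable (hXint (f s)).aestronglyMeasurable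
    have h1 : ∫ ω, ((fun t : Finset (Fin b) => if t = s then (1:ℝ) else 0) ∘ I) ω ∂μ
        = ((b.choose m : ℝ))⁻¹ := by
      have : ((fun t : Finset (Fin b) => if t = s then (1:ℝ) else 0) ∘ I)
          = ({ω | I ω = s}).indicator (fun _ => (1:ℝ)) := by
        funext ω
        rw [Set.indicator_apply]
        by_cases h : I ω = s <;> simp [h]
      rw [this, MeasureTheory.integral_indicator_const (1:ℝ) (hEmeas s), measureReal_def, hμE s hs]
      simp [ENNReal.toReal_inv]
    calc ∫ ω, (if I ω = s then (1:ℝ) else 0) * X (f s) ω ∂μ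
        = ∫ ω, (((fun t : Finset (Fin b) => if t = s then (1:ℝ) else 0) ∘ I)
            * fun ω => X (f s) ω) ω ∂μ := rfl
      _ = (∫ ω, ((fun t : Finset (Fin b) => if t = s then (1:ℝ) else 0) ∘ I) ω ∂μ)
            * ∫ ω, X (f s) ω ∂μ := hmul
      _ = ((b.choose m : ℝ))⁻¹ * ((γ₀ / b) * (((f s : Fin b) : ℕ) + 1)) := by
            rw [h1, hXmean (f s)]
  have hsumnat : ∑ s ∈ 𝒮, ((((f s : Fin b) : ℕ)) + 1) = l * (b+1).choose (m+1) :=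
    key_fin hb m l hl1 hl2
  rw [MeasureTheory.integral_congr_ae hae, MeasureTheory.integral_finset_sum 𝒮 hintind,
    Finset.sum_congr rfl hterm]
  rw [← Finset.mul_sum, ← Finset.mul_sum]
  have hcastsum : ∑ s ∈ 𝒮, ((((f s : Fin b) : ℕ) : ℝ) + 1)
      = (l : ℝ) * ((b+1).choose (m+1) : ℝ) := by
    exact_mod_cast hsumnat
  rw [hcastsum]
  have hbr : ((b : ℝ) - r + 1) = (m : ℝ) + 1 := by
    rw [hm]
    push_cast [Nat.cast_sub hr.le]
    ring
  rw [hbr]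
  have hid : ((b:ℝ) + 1) * (b.choose m : ℝ) = ((b+1).choose (m+1) : ℝ) * ((m:ℝ) + 1) := by
    exact_mod_cast Nat.add_one_mul_choose_eq b m
  have hb0 : (b:ℝ) ≠ 0 := Nat.cast_ne_zero.2 (by omega)
  have hC0' : (b.choose m : ℝ) ≠ 0 := Nat.cast_ne_zero.2 hC0
  have hm1 : (m:ℝ) + 1 ≠ 0 := by positivity
  field_simp
  linear_combination (-1 : ℝ) * hid
end

section
/- For natural numbers b and r with r < b, the following binomial identity holds: ∑_{i=1}^{r+1} i · C(b−i, r+1−i) = C(b+1, r), where C(·,·) denotes the binomial coefficient. -/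
lemma hockey (c m : ℕ) :
    ∑ j ∈ Finset.range (m + 1), Nat.choose (c + j) j = Nat.choose (c + m + 1) m := by
  induction m with
  | zero => simp
  | succ m ih =>
      rw [Finset.sum_range_succ, ih,
        show c + (m + 1) + 1 = (c + m + 1) + 1 by ring, Nat.choose_succ_succ,
        show c + (m + 1) = c + m + 1 by ring]

lemma aux (c r : ℕ) :
    ∑ j ∈ Finset.range (r + 1), (r + 1 - j) * Nat.choose (c + j) j
      = Nat.choose (c + r + 2) r := by
  induction r with
  | zero => simp
  | succ r ih =>
      have h1 : ∀ j ∈ Finset.range (r + 1),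
          (r + 1 + 1 - j) * Nat.choose (c + j) j
            = (r + 1 - j) * Nat.choose (c + j) j + Nat.choose (c + j) j := by
        intro j hj
        simp only [Finset.mem_range] at hj
        rw [show r + 1 + 1 - j = (r + 1 - j) + 1 by omega, add_mul, one_mul]
      rw [Finset.sum_range_succ, Finset.sum_congr rfl h1, Finset.sum_add_distrib, ih,
        show r + 1 + 1 - (r + 1) = 1 by omega, one_mul,
        show c + (r + 1) = c + r + 1 by ring, hockey]
      have pascal2 : Nat.choose (c + r + 1 + 2) (r + 1)
          = Nat.choose (c + r + 2) r
            + (Nat.choose (c + r + 1) r + Nat.choose (c + r + 1) (r + 1)) := by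
        rw [show c + r + 1 + 2 = (c + r + 2) + 1 by ring, Nat.choose_succ_succ,
          show c + r + 2 = (c + r + 1) + 1 by ring, Nat.choose_succ_succ]
      rw [pascal2]
      ring

/-- Binomial identity from the proof of Proposition 1:
`∑_{i=1}^{r+1} i · C(b−i, r+1−i) = C(b+1, r)` for `r < b`. -/
theorem sum_mul_choose_eq_choose_succ (b r : ℕ) (h : r < b) :
    ∑ i ∈ Finset.Icc 1 (r + 1), i * Nat.choose (b - i) (r + 1 - i)
      = Nat.choose (b + 1) r := by
  obtain ⟨c, rfl⟩ : ∃ c, b = c + r + 1 := ⟨b - r - 1, by omega⟩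
  rw [show Finset.Icc 1 (r + 1) = Finset.Ico 1 (r + 2) by rw [← Finset.Ico_add_one_right_eq_Icc]; rfl,
    Finset.sum_Ico_eq_sum_range,
    show r + 2 - 1 = r + 1 from rfl]
  rw [← Finset.sum_range_reflect]
  have key : ∀ j ∈ Finset.range (r + 1),
      (1 + (r + 1 - 1 - j)) * Nat.choose (c + r + 1 - (1 + (r + 1 - 1 - j))) (r + 1 - (1 + (r + 1 - 1 - j)))
        = (r + 1 - j) * Nat.choose (c + j) j := by
    intro j hj
    simp only [Finset.mem_range] at hj
    have e1 : 1 + (r + 1 - 1 - j) = r + 1 - j := by omega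
    rw [e1, show c + r + 1 - (r + 1 - j) = c + j by omega,
      show r + 1 - (r + 1 - j) = j by omega]
  rw [Finset.sum_congr rfl key, aux,
    show c + r + 1 + 1 = c + r + 2 by ring]
end

section
/- Le Cam's theorem: Let n ≥ 1, let p₁, …, p_n ∈ [0,1], and let Z₁, …, Z_n be independent random variables on a probability space with P(Z_i = 1) = p_i and P(Z_i = 0) = 1 − p_i for each i. Let S = ∑_{i=1}^n Z_i and λ = ∑_{i=1}^n p_i. Then ∑_{m=0}^{∞} | P(S = m) − λ^m e^{−λ} / m! | ≤ 2 ∑_{i=1}^n p_i². -/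
open MeasureTheory ProbabilityTheory Finset

namespace LeCamAux

noncomputable def pois (a : ℝ) (m : ℕ) : ℝ := a ^ m * Real.exp (-a) / m.factorial

noncomputable def conv (f g : ℕ → ℝ) (m : ℕ) : ℝ :=
  ∑ k ∈ range (m + 1), f k * g (m - k)

lemma pois_nonneg {a : ℝ} (ha : 0 ≤ a) (m : ℕ) : 0 ≤ pois a m := by
  unfold pois; positivity

lemma summable_pois (a : ℝ) : Summable (pois a) := by
  have : pois a = fun m => (a ^ m / m.factorial) * Real.exp (-a) := by
    funext m; unfold pois; ring
  rw [this]
  exact (Real.summable_pow_div_factorial a).mul_right _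

lemma tsum_pois (a : ℝ) : ∑' m, pois a m = 1 := by
  have h : ∑' m : ℕ, a ^ m / m.factorial = Real.exp a := by
    rw [Real.exp_eq_exp_ℝ, NormedSpace.exp_eq_tsum_div]
  have : ∑' m, pois a m = (∑' m : ℕ, a ^ m / m.factorial) * Real.exp (-a) := by
    rw [← tsum_mul_right]
    congr 1; funext m; unfold pois; ring
  rw [this, h, ← Real.exp_add]
  simp

lemma conv_nonneg {f g : ℕ → ℝ} (hf : ∀ m, 0 ≤ f m) (hg : ∀ m, 0 ≤ g m) (m : ℕ) :
    0 ≤ conv f g m :=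
  Finset.sum_nonneg fun k _ => mul_nonneg (hf k) (hg _)

lemma summable_conv {f g : ℕ → ℝ} (hf : ∀ m, 0 ≤ f m) (hg : ∀ m, 0 ≤ g m)
    (hfs : Summable f) (hgs : Summable g) : Summable (conv f g) := by
  have hf' : Summable fun m => ‖f m‖ := by
    simpa only [Real.norm_of_nonneg (hf _)] using hfs
  have hg' : Summable fun m => ‖g m‖ := by
    simpa only [Real.norm_of_nonneg (hg _)] using hgs
  exact (summable_norm_sum_mul_range_of_summable_norm hf' hg').of_norm

lemma tsum_conv {f g : ℕ → ℝ} (hf : ∀ m, 0 ≤ f m) (hg : ∀ m, 0 ≤ g m)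
    (hfs : Summable f) (hgs : Summable g) :
    ∑' m, conv f g m = (∑' m, f m) * (∑' m, g m) := by
  have hf' : Summable fun m => ‖f m‖ := by
    simpa only [Real.norm_of_nonneg (hf _)] using hfs
  have hg' : Summable fun m => ‖g m‖ := by
    simpa only [Real.norm_of_nonneg (hg _)] using hgs
  exact (tsum_mul_tsum_eq_tsum_sum_range_of_summable_norm hf' hg').symm

lemma conv_pois_pois {a b : ℝ} (ha : 0 ≤ a) (hb : 0 ≤ b) (m : ℕ) :
    conv (pois a) (pois b) m = pois (a + b) m := by
  unfold conv pois
  rw [add_pow, eq_div_iff (by positivity : (m.factorial:ℝ) ≠ 0), Finset.sum_mul, Finset.sum_mul]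
  refine Finset.sum_congr rfl fun k hk => ?_
  have hkm : k ≤ m := Nat.lt_succ_iff.mp (Finset.mem_range.mp hk)
  have hfact : ((m.choose k : ℝ)) * (k.factorial : ℝ) * ((m - k).factorial : ℝ) = m.factorial := by
    exact_mod_cast congrArg (Nat.cast (R := ℝ)) (Nat.choose_mul_factorial_mul_factorial hkm)
  have hexp : Real.exp (-a) * Real.exp (-b) = Real.exp (-(a + b)) := by
    rw [← Real.exp_add]; ring_nf
  have hk0 : (k.factorial : ℝ) ≠ 0 := by positivity
  have hmk0 : ((m - k).factorial : ℝ) ≠ 0 := by positivity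
  rw [← hfact, ← hexp]
  field_simp

lemma l1_conv {f f' g g' : ℕ → ℝ}
    (hf : ∀ m, 0 ≤ f m) (hf' : ∀ m, 0 ≤ f' m) (hg : ∀ m, 0 ≤ g m) (hg' : ∀ m, 0 ≤ g' m)
    (hfs : Summable f) (hf's : Summable f') (hgs : Summable g) (hg's : Summable g')
    (hf'1 : ∑' m, f' m = 1) (hg1 : ∑' m, g m = 1) :
    ∑' m, |conv f g m - conv f' g' m| ≤ (∑' m, |f m - f' m|) + (∑' m, |g m - g' m|) := by
  set F : ℕ → ℝ := fun k => |f k - f' k| with hF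
  set G : ℕ → ℝ := fun k => |g k - g' k| with hG
  have hFnn : ∀ m, 0 ≤ F m := fun m => abs_nonneg _
  have hGnn : ∀ m, 0 ≤ G m := fun m => abs_nonneg _
  have hFs : Summable F := (hfs.sub hf's).abs
  have hGs : Summable G := (hgs.sub hg's).abs
  have hpt : ∀ m, |conv f g m - conv f' g' m| ≤ conv F g m + conv f' G m := by
    intro m
    have : conv f g m - conv f' g' m
        = ∑ k ∈ range (m + 1), ((f k - f' k) * g (m - k) + f' k * (g (m - k) - g' (m - k))) := by
      unfold conv; rw [← Finset.sum_sub_distrib]; congr 1; funext k; ring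
    rw [this]
    refine (Finset.abs_sum_le_sum_abs _ _).trans ?_
    unfold conv
    rw [← Finset.sum_add_distrib]
    refine Finset.sum_le_sum fun k _ => ?_
    refine (abs_add_le _ _).trans ?_
    rw [abs_mul, abs_mul, abs_of_nonneg (hg _), abs_of_nonneg (hf' _)]
  have hS1 : Summable (conv F g) := summable_conv hFnn hg hFs hgs
  have hS2 : Summable (conv f' G) := summable_conv hf' hGnn hf's hGs
  calc ∑' m, |conv f g m - conv f' g' m|
      ≤ ∑' m, (conv F g m + conv f' G m) := by
        refine Summable.tsum_le_tsum hpt ?_ (hS1.add hS2)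
        exact Summable.of_nonneg_of_le (fun m => abs_nonneg _) hpt (hS1.add hS2)
    _ = (∑' m, conv F g m) + ∑' m, conv f' G m := Summable.tsum_add hS1 hS2
    _ = (∑' m, F m) * (∑' m, g m) + (∑' m, f' m) * (∑' m, G m) := by
        rw [tsum_conv hFnn hg hFs hgs, tsum_conv hf' hGnn hf's hGs]
    _ = (∑' m, F m) + (∑' m, G m) := by rw [hg1, hf'1]; ring

lemma bern_bound {q : ℝ} (hq0 : 0 ≤ q) (hq1 : q ≤ 1) {f : ℕ → ℝ}
    (hf0 : f 0 = 1 - q) (hf1 : f 1 = q) (hf : ∀ m, 2 ≤ m → f m = 0) :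
    ∑' m, |f m - pois q m| ≤ 2 * q ^ 2 := by
  have hps := summable_pois q
  have hfs : Summable f := by
    apply summable_of_ne_finset_zero (s := {0, 1})
    intro m hm
    simp only [Finset.mem_insert, Finset.mem_singleton] at hm
    push_neg at hm
    exact hf m (by omega)
  have hsum : Summable fun m => |f m - pois q m| := (hfs.sub hps).abs
  have e1 : Real.exp (-q) ≤ 1 := by
    rw [Real.exp_le_one_iff]; linarith
  have e2 : 1 - q ≤ Real.exp (-q) := by
    have := Real.add_one_le_exp (-q); linarith
  have hp0 : pois q 0 = Real.exp (-q) := by unfold pois; simp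
  have hp1 : pois q 1 = q * Real.exp (-q) := by unfold pois; simp
  have htail : ∑' m, pois q (m + 2) = 1 - Real.exp (-q) - q * Real.exp (-q) := by
    have h1 : ∑' m, pois q m = pois q 0 + ∑' m, pois q (m + 1) := Summable.tsum_eq_zero_add hps
    have h2 : ∑' m, pois q (m + 1) = pois q 1 + ∑' m, pois q (m + 2) :=
      Summable.tsum_eq_zero_add ((summable_nat_add_iff 1).mpr hps)
    have := tsum_pois q
    rw [h1, h2, hp0, hp1] at this
    linarith
  have h1 : ∑' m, |f m - pois q m|
      = |f 0 - pois q 0| + (|f 1 - pois q 1| + ∑' m, |f (m + 2) - pois q (m + 2)|) := by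
    rw [Summable.tsum_eq_zero_add hsum, Summable.tsum_eq_zero_add ((summable_nat_add_iff 1).mpr hsum)]
  have h2 : ∑' m, |f (m + 2) - pois q (m + 2)| = ∑' m, pois q (m + 2) := by
    congr 1; funext m
    rw [hf (m + 2) (by omega), zero_sub, abs_neg, abs_of_nonneg (pois_nonneg hq0 _)]
  have hqe : q * Real.exp (-q) ≤ q := by nlinarith
  rw [h1, h2, htail, hf0, hf1, hp0, hp1]
  rw [abs_of_nonpos (by linarith), abs_of_nonneg (by nlinarith)]
  nlinarith [Real.add_one_le_exp (-q), mul_le_mul_of_nonneg_left e2 hq0]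

section Law
variable {Ω : Type*} [MeasurableSpace Ω] (μ : Measure Ω) [IsProbabilityMeasure μ]

noncomputable def law (X : Ω → ℕ) (m : ℕ) : ℝ := (μ {ω | X ω = m}).toReal

lemma law_nonneg (X : Ω → ℕ) (m : ℕ) : 0 ≤ law μ X m := ENNReal.toReal_nonneg

lemma tsum_law_ennreal {X : Ω → ℕ} (hX : Measurable X) :
    ∑' m : ℕ, μ {ω | X ω = m} = 1 := by
  have h : ⋃ m : ℕ, {ω | X ω = m} = Set.univ := by
    ext ω; simp
  have hd : Pairwise (Function.onFun Disjoint fun m => {ω | X ω = m}) := by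
    intro i j hij
    refine Set.disjoint_left.mpr fun ω h1 h2 => hij ?_
    have e1 : X ω = i := h1
    have e2 : X ω = j := h2
    omega
  have := measure_iUnion (μ := μ) (f := fun m => {ω | X ω = m}) hd
    (fun m => hX (measurableSet_singleton m))
  rw [← this, h, measure_univ]

lemma summable_law {X : Ω → ℕ} (hX : Measurable X) : Summable (law μ X) :=
  ENNReal.summable_toReal (by rw [tsum_law_ennreal μ hX]; exact ENNReal.one_ne_top)

lemma tsum_law {X : Ω → ℕ} (hX : Measurable X) : ∑' m, law μ X m = 1 := by
  unfold law
  rw [← ENNReal.tsum_toReal_eq (fun m => measure_ne_top μ _), tsum_law_ennreal μ hX,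
    ENNReal.toReal_one]

lemma law_add {X Y : Ω → ℕ} (hX : Measurable X) (hY : Measurable Y)
    (h : IndepFun X Y μ) : law μ (X + Y) = conv (law μ X) (law μ Y) := by
  funext m
  have hset : {ω | (X + Y) ω = m}
      = ⋃ k ∈ Finset.range (m + 1), (X ⁻¹' {k} ∩ Y ⁻¹' {m - k}) := by
    ext ω
    simp only [Set.mem_setOf_eq, Pi.add_apply, Set.mem_iUnion, Finset.mem_range,
      Set.mem_inter_iff, Set.mem_preimage, Set.mem_singleton_iff]
    constructor
    · intro hxy
      exact ⟨X ω, by omega, rfl, by omega⟩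
    · rintro ⟨k, hk, rfl, hy⟩
      omega
  have hdisj : (↑(Finset.range (m + 1)) : Set ℕ).PairwiseDisjoint
      fun k => X ⁻¹' {k} ∩ Y ⁻¹' {m - k} := by
    intro i _ j _ hij
    refine Set.disjoint_left.mpr fun ω h1 h2 => hij ?_
    have := h1.1; have := h2.1
    simp only [Set.mem_preimage, Set.mem_singleton_iff] at *
    omega
  have hmeas : ∀ k ∈ Finset.range (m + 1),
      MeasurableSet (X ⁻¹' {k} ∩ Y ⁻¹' {m - k}) := fun k _ =>
    (hX (measurableSet_singleton _)).inter (hY (measurableSet_singleton _))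
  unfold law conv
  rw [hset, measure_biUnion_finset hdisj hmeas,
    ENNReal.toReal_sum (fun k _ => measure_ne_top μ _)]
  refine Finset.sum_congr rfl fun k _ => ?_
  rw [h.measure_inter_preimage_eq_mul _ _ (measurableSet_singleton _)
    (measurableSet_singleton _), ENNReal.toReal_mul]
  rfl

lemma law_eq_zero_of_two_le {Z : Ω → ℕ} (hZ : Measurable Z) {q : ℝ}
    (h1 : (μ {ω | Z ω = 1}).toReal = q) (h0 : (μ {ω | Z ω = 0}).toReal = 1 - q)
    {m : ℕ} (hm : 2 ≤ m) : (μ {ω | Z ω = m}).toReal = 0 := by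
  set u : Set Ω := {ω | Z ω = 0} ∪ {ω | Z ω = 1} with hu
  have hmeas0 : MeasurableSet {ω | Z ω = 0} := hZ (measurableSet_singleton 0)
  have hmeas1 : MeasurableSet {ω | Z ω = 1} := hZ (measurableSet_singleton 1)
  have hmu : μ u = 1 := by
    have hdisj : Disjoint {ω | Z ω = 0} {ω | Z ω = 1} := by
      refine Set.disjoint_left.mpr fun ω e1 e2 => ?_
      have : Z ω = 0 := e1; have : Z ω = 1 := e2; omega
    have : μ u = μ {ω | Z ω = 0} + μ {ω | Z ω = 1} := measure_union hdisj hmeas1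
    rw [← ENNReal.toReal_eq_one_iff, this,
      ENNReal.toReal_add (measure_ne_top μ _) (measure_ne_top μ _), h0, h1]
    ring
  have hcompl : μ uᶜ = 0 := by
    rw [measure_compl (hmeas0.union hmeas1) (measure_ne_top μ _), hmu, measure_univ,
      tsub_self]
  have hsub : {ω | Z ω = m} ⊆ uᶜ := by
    intro ω hω
    have : Z ω = m := hω
    simp only [hu, Set.mem_compl_iff, Set.mem_union, Set.mem_setOf_eq]
    omega
  rw [measure_mono_null hsub hcompl, ENNReal.toReal_zero]

lemma key {n : ℕ} (p : Fin n → ℝ) (hp : ∀ i, p i ∈ Set.Icc (0 : ℝ) 1)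
    (Z : Fin n → Ω → ℕ) (hZmeas : ∀ i, Measurable (Z i))
    (hindep : iIndepFun Z μ)
    (h1 : ∀ i, (μ {ω | Z i ω = 1}).toReal = p i)
    (h0 : ∀ i, (μ {ω | Z i ω = 0}).toReal = 1 - p i)
    (s : Finset (Fin n)) :
    ∑' m, |law μ (∑ i ∈ s, Z i) m - pois (∑ i ∈ s, p i) m|
      ≤ 2 * ∑ i ∈ s, p i ^ 2 := by
  classical
  induction s using Finset.induction_on with
  | empty =>
    have hzero : ∀ m, |law μ (∑ i ∈ (∅ : Finset (Fin n)), Z i) m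
        - pois (∑ i ∈ (∅ : Finset (Fin n)), p i) m| = 0 := by
      intro m
      rw [Finset.sum_empty, Finset.sum_empty]
      unfold law pois
      rcases m with _ | k
      · have e1 : {ω : Ω | (0 : Ω → ℕ) ω = 0} = Set.univ := by ext ω; simp
        rw [e1, measure_univ]
        norm_num
      · have e2 : {ω : Ω | (0 : Ω → ℕ) ω = k + 1} = ∅ := by ext ω; simp
        rw [e2, measure_empty]
        norm_num
    calc ∑' m, |law μ (∑ i ∈ (∅ : Finset (Fin n)), Z i) m
          - pois (∑ i ∈ (∅ : Finset (Fin n)), p i) m|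
        = ∑' _ : ℕ, (0 : ℝ) := by congr 1; funext m; exact hzero m
      _ = 0 := tsum_zero
      _ ≤ 2 * ∑ i ∈ (∅ : Finset (Fin n)), p i ^ 2 := by simp
  | @insert a s ha ih =>
    have hYmeas : Measurable (∑ i ∈ s, Z i) := by
      have : (∑ i ∈ s, Z i) = fun ω => ∑ i ∈ s, Z i ω := by
        funext ω; exact Finset.sum_apply ω s Z
      rw [this]
      exact Finset.measurable_sum s fun i _ => hZmeas i
    have hindepXY : IndepFun (Z a) (∑ i ∈ s, Z i) μ :=
      (hindep.indepFun_finsetSum_of_notMem hZmeas ha).symm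
    have hpa := hp a
    have hpa0 : 0 ≤ p a := hpa.1
    have hps0 : 0 ≤ ∑ i ∈ s, p i := Finset.sum_nonneg fun i _ => (hp i).1
    have hlaw : law μ (∑ i ∈ insert a s, Z i)
        = conv (law μ (Z a)) (law μ (∑ i ∈ s, Z i)) := by
      rw [Finset.sum_insert ha]
      exact law_add μ (hZmeas a) hYmeas hindepXY
    have hpois : pois (∑ i ∈ insert a s, p i)
        = conv (pois (p a)) (pois (∑ i ∈ s, p i)) := by
      funext m
      rw [Finset.sum_insert ha, ← conv_pois_pois hpa0 hps0]
    have hbern : ∑' m, |law μ (Z a) m - pois (p a) m| ≤ 2 * p a ^ 2 := by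
      exact bern_bound hpa0 hpa.2 (f := law μ (Z a)) (h0 a) (h1 a)
        (fun m hm => law_eq_zero_of_two_le μ (hZmeas a) (h1 a) (h0 a) hm)
    calc ∑' m, |law μ (∑ i ∈ insert a s, Z i) m - pois (∑ i ∈ insert a s, p i) m|
        = ∑' m, |conv (law μ (Z a)) (law μ (∑ i ∈ s, Z i)) m
            - conv (pois (p a)) (pois (∑ i ∈ s, p i)) m| := by rw [hlaw, hpois]
      _ ≤ (∑' m, |law μ (Z a) m - pois (p a) m|)
            + ∑' m, |law μ (∑ i ∈ s, Z i) m - pois (∑ i ∈ s, p i) m| :=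
          l1_conv (law_nonneg μ _) (pois_nonneg hpa0) (law_nonneg μ _)
            (pois_nonneg hps0) (summable_law μ (hZmeas a)) (summable_pois _)
            (summable_law μ hYmeas) (summable_pois _) (tsum_pois _) (tsum_law μ hYmeas)
      _ ≤ 2 * p a ^ 2 + 2 * ∑ i ∈ s, p i ^ 2 := add_le_add hbern ih
      _ = 2 * ∑ i ∈ insert a s, p i ^ 2 := by rw [Finset.sum_insert ha]; ring

end Law

end LeCamAux

open LeCamAux in
/-- Le Cam's theorem: for independent Bernoulli random variables `Z i` with
parameters `p i`, the ℓ¹ distance between the law of `S = ∑ Z i` and the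
Poisson distribution with parameter `λ = ∑ p i` is at most `2 ∑ (p i)²`. -/
theorem le_cam {Ω : Type*} [MeasurableSpace Ω] (μ : Measure Ω) [IsProbabilityMeasure μ]
    (n : ℕ) (hn : 1 ≤ n) (p : Fin n → ℝ) (hp : ∀ i, p i ∈ Set.Icc (0 : ℝ) 1)
    (Z : Fin n → Ω → ℕ) (hZmeas : ∀ i, Measurable (Z i))
    (hindep : iIndepFun Z μ)
    (h1 : ∀ i, (μ {ω | Z i ω = 1}).toReal = p i)
    (h0 : ∀ i, (μ {ω | Z i ω = 0}).toReal = 1 - p i) :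
    ∑' m : ℕ,
        |(μ {ω | ∑ i, Z i ω = m}).toReal
          - (∑ i, p i) ^ m * Real.exp (-(∑ i, p i)) / (Nat.factorial m)|
      ≤ 2 * ∑ i, (p i) ^ 2 := by
  have hkey := key μ p hp Z hZmeas hindep h1 h0 Finset.univ
  have hfn : (∑ i : Fin n, Z i) = fun ω => ∑ i : Fin n, Z i ω := by
    funext ω; exact Finset.sum_apply ω Finset.univ Z
  rw [hfn] at hkey
  simpa only [law, pois] using hkey
end
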